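/- Let s, t, u be rational numbers with t < -1 < u < 0 < s and 1/(s-u) + 1/(u-t) < 1. Define P_A = {(α,n) ∈ ℤ² : α ≥ 0, n ≥ 0, ⌈αu⌉ + n ≤ αs} and P_B = {(α,n) ∈ ℤ² : n ≥ α, n ≥ 0, n ≤ (α-n)t - ⌈(α-n)u⌉}. Then the set ℕ₀² \ (P_A ∪ P_B) is finite, where ℕ₀ denotes the non-negative integers. -/

import Mathlib

theorem complement_finite (s t u : ℚ)
    (h1 : t < -1) (h2 : -1 < u) (h3 : u < 0) (h4 : 0 < s)
    (h5 : 1 / (s - u) + 1 / (u - t) < 1) :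
    Set.Finite {p : ℤ × ℤ | 0 ≤ p.1 ∧ 0 ≤ p.2 ∧
      p ∉ ({q : ℤ × ℤ | 0 ≤ q.1 ∧ 0 ≤ q.2 ∧
              ((⌈(q.1 : ℚ) * u⌉ : ℚ) + (q.2 : ℚ)) ≤ (q.1 : ℚ) * s} ∪
            {q : ℤ × ℤ | q.1 ≤ q.2 ∧ 0 ≤ q.2 ∧
              (q.2 : ℚ) ≤ ((q.1 : ℚ) - (q.2 : ℚ)) * t - (⌈((q.1 : ℚ) - (q.2 : ℚ)) * u⌉ : ℚ)})} := by
  set a : ℚ := s - u with ha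
  set b : ℚ := u - t with hb
  have ha0 : 0 < a := by simp only [ha]; linarith
  have hb0 : 0 < b := by simp only [hb]; linarith
  have hbinv : 0 < 1 / b := by positivity
  have hainv : 0 < 1 / a := by positivity
  have ha1 : 1 < a := by
    by_contra h
    push_neg at h
    have : 1 ≤ 1 / a := by rw [le_div_iff₀ ha0]; linarith
    linarith
  set c : ℚ := 1 / a + 1 / b with hc
  have hc0 : 0 < c := by positivity
  have hc1 : c < 1 := h5
  set N : ℤ := ⌈c / (1 - c)⌉ with hN
  apply Set.Finite.subset (Set.finite_Icc ((0 : ℤ), (0 : ℤ)) (N, N))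
  rintro ⟨α, n⟩ ⟨hα, hn, hnot⟩
  simp only [Set.mem_union, Set.mem_setOf_eq, not_or, not_and, not_le] at hnot
  obtain ⟨hnotA, hnotB⟩ := hnot
  have hA : (α : ℚ) * s < (⌈(α : ℚ) * u⌉ : ℚ) + (n : ℚ) := hnotA hα hn
  have hceilA : (⌈(α : ℚ) * u⌉ : ℚ) < (α : ℚ) * u + 1 := Int.ceil_lt_add_one _
  have key1 : (α : ℚ) * a < (n : ℚ) + 1 := by
    have : (α : ℚ) * a = (α : ℚ) * s - (α : ℚ) * u := by ring
    linarith
  -- α ≤ n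
  have hαn : α ≤ n := by
    by_contra h
    push_neg at h
    have h' : n + 1 ≤ α := h
    have h1q : ((n : ℚ)) + 1 ≤ (α : ℚ) := by exact_mod_cast h'
    have hα1 : (1 : ℚ) ≤ (α : ℚ) := by
      have : (0 : ℚ) ≤ (n : ℚ) := by exact_mod_cast hn
      linarith
    have : (α : ℚ) * 1 < (α : ℚ) * a := by
      apply mul_lt_mul_of_pos_left ha1
      linarith
    linarith
  have hB : ((α : ℚ) - n) * t - (⌈((α : ℚ) - n) * u⌉ : ℚ) < (n : ℚ) := hnotB hαn hn
  have hceilB : (⌈((α : ℚ) - n) * u⌉ : ℚ) < ((α : ℚ) - n) * u + 1 := Int.ceil_lt_add_one _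
  have key2 : ((n : ℚ) - α) * b < (n : ℚ) + 1 := by
    have : ((n : ℚ) - α) * b = ((α : ℚ) - n) * t - ((α : ℚ) - n) * u := by
      simp only [hb]; ring
    linarith
  -- n < (n+1) * c
  have hnq : (0 : ℚ) ≤ (n : ℚ) := by exact_mod_cast hn
  have hαq : (0 : ℚ) ≤ (α : ℚ) := by exact_mod_cast hα
  have hn1 : (0 : ℚ) < (n : ℚ) + 1 := by linarith
  have bound1 : (α : ℚ) < ((n : ℚ) + 1) / a := by
    rw [lt_div_iff₀ ha0]; linarith
  have bound2 : (n : ℚ) - α < ((n : ℚ) + 1) / b := by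
    rw [lt_div_iff₀ hb0]; linarith
  have keyn : (n : ℚ) < ((n : ℚ) + 1) * c := by
    calc (n : ℚ) = (α : ℚ) + ((n : ℚ) - α) := by ring
      _ < ((n : ℚ) + 1) / a + ((n : ℚ) + 1) / b := by linarith
      _ = ((n : ℚ) + 1) * c := by rw [hc]; field_simp
  have hnc : (n : ℚ) < c / (1 - c) := by
    rw [lt_div_iff₀ (by linarith : (0 : ℚ) < 1 - c)]
    nlinarith [keyn]
  have hnN : n ≤ N := by
    have h2 : c / (1 - c) ≤ (N : ℚ) := Int.le_ceil _
    have : (n : ℚ) < (N : ℚ) := lt_of_lt_of_le hnc h2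
    exact_mod_cast le_of_lt this
  refine Set.mem_Icc.mpr ⟨⟨hα, hn⟩, ⟨le_trans hαn hnN, hnN⟩⟩
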